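/- Let X be a first countable regular topological space, S a set, and ρ : S → X a map. Let 𝒞 be the set of sequences (s_i) in S such that (ρ(s_i)) converges in X, and Λ : 𝒞 → X the limit map. Suppose x ∈ X and for each j ∈ ℕ we have c_j = (s_{i,j})_{i=1}^∞ ∈ 𝒞. Then (Λ(c_j))_{j=1}^∞ converges to x if and only if there is a function μ : ℕ → ℕ such that for every κ : ℕ → ℕ with κ(j) ≥ μ(j) for all j, the diagonal sequence (ρ(s_{κ(j),j}))_{j=1}^∞ converges to x. -/

import Mathlib

theorem diagonal_convergence {X S : Type*} [TopologicalSpace X]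
    [FirstCountableTopology X] [RegularSpace X]
    (ρ : S → X) (s : ℕ → ℕ → S) (l : ℕ → X)
    (hl : ∀ j : ℕ, Filter.Tendsto (fun i : ℕ => ρ (s i j)) Filter.atTop (nhds (l j)))
    (x : X) :
    Filter.Tendsto l Filter.atTop (nhds x) ↔
      ∃ μ : ℕ → ℕ, ∀ κ : ℕ → ℕ, (∀ j : ℕ, μ j ≤ κ j) →
        Filter.Tendsto (fun j : ℕ => ρ (s (κ j) j)) Filter.atTop (nhds x) := by
  classical
  obtain ⟨b, hb⟩ := (nhds x).exists_antitone_basis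
  set V : ℕ → Set X := fun n => if n = 0 then Set.univ else interior (b n) with hVdef
  have hV0 : V 0 = Set.univ := rfl
  have hVopen : ∀ n, IsOpen (V n) := by
    intro n
    by_cases h : n = 0 <;> simp [hVdef, h, isOpen_interior]
  have hVnhds : ∀ n, V n ∈ nhds x := by
    intro n
    by_cases h : n = 0
    · simp [hVdef, h]
    · simp only [hVdef, h, if_false]
      exact interior_mem_nhds.mpr (hb.mem n)
  have hVanti : ∀ m n, m ≤ n → V n ⊆ V m := by
    intro m n hmn
    by_cases hm : m = 0
    · simp [hVdef, hm]
    · have hn : n ≠ 0 := by omega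
      simp only [hVdef, hm, hn, if_false]
      exact interior_mono (hb.antitone hmn)
  have hVbasis : ∀ t ∈ nhds x, ∃ n, V n ⊆ t := by
    intro t ht
    obtain ⟨n, hn⟩ := hb.mem_iff.mp ht
    refine ⟨n + 1, ?_⟩
    have hVe : V (n + 1) = interior (b (n + 1)) := rfl
    rw [hVe]
    exact (interior_subset.trans ((hb.antitone (Nat.le_succ n)).trans hn))
  constructor
  · -- forward direction
    intro hlx
    set m : ℕ → ℕ := fun j => Nat.findGreatest (fun n => l j ∈ V n) j with hm
    have hm1 : ∀ j, l j ∈ V (m j) :=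
      fun j => Nat.findGreatest_spec (P := fun n => l j ∈ V n) (Nat.zero_le j) (show l j ∈ V 0 by rw [hV0]; trivial)
    have hm2 : ∀ N, ∀ᶠ j in Filter.atTop, N ≤ m j := by
      intro N
      have h1 : ∀ᶠ j in Filter.atTop, l j ∈ V N := hlx (hVnhds N)
      have h2 : ∀ᶠ j in Filter.atTop, N ≤ j := Filter.eventually_atTop.mpr ⟨N, fun _ h => h⟩
      filter_upwards [h1, h2] with j hj1 hj2
      exact Nat.le_findGreatest hj2 hj1
    -- pick μ
    have hmu : ∀ j, ∃ M : ℕ, ∀ i ≥ M, ρ (s i j) ∈ V (m j) := by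
      intro j
      have := (hl j).eventually ((hVopen (m j)).mem_nhds (hm1 j))
      exact Filter.eventually_atTop.mp this
    choose μ hμ using hmu
    refine ⟨μ, fun κ hκ => ?_⟩
    intro t ht
    rw [Filter.mem_map]
    obtain ⟨n, hn⟩ := hVbasis t ht
    filter_upwards [hm2 n] with j hj
    exact hn (hVanti n (m j) hj (hμ j (κ j) (hκ j)))
  · -- backward direction
    rintro ⟨μ, hμ⟩
    by_contra hnot
    have : ∃ C, (C ∈ nhds x ∧ IsClosed C) ∧ ∃ᶠ j in Filter.atTop, l j ∉ C := by
      by_contra hC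
      push_neg at hC
      apply hnot
      rw [(closed_nhds_basis x).tendsto_right_iff]
      rintro C ⟨hC1, hC2⟩
      have := hC C ⟨hC1, hC2⟩
      simpa using this
      -- need: ¬∃ᶠ j ∉ C → eventually ∈ C
    obtain ⟨C, ⟨hCnhds, hCclosed⟩, hCfreq⟩ := this
    have hκex : ∀ j, l j ∉ C → ∃ i ≥ μ j, ρ (s i j) ∉ C := by
      intro j hj
      have : Cᶜ ∈ nhds (l j) := hCclosed.isOpen_compl.mem_nhds hj
      have h1 := Filter.eventually_atTop.mp ((hl j).eventually this)
      obtain ⟨M, hM⟩ := h1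
      exact ⟨max M (μ j), le_max_right _ _, hM _ (le_max_left _ _)⟩
    set κ : ℕ → ℕ := fun j =>
      if h : l j ∉ C then (hκex j h).choose else μ j with hκdef
    have hκge : ∀ j, μ j ≤ κ j := by
      intro j
      by_cases h : l j ∉ C
      · simp only [hκdef, dif_pos h]
        exact (hκex j h).choose_spec.1
      · simp only [hκdef]
        rw [dif_neg h]
    have htend := hμ κ hκge
    have hev : ∀ᶠ j in Filter.atTop, ρ (s (κ j) j) ∈ C := htend hCnhds
    have hfr : ∃ᶠ j in Filter.atTop, ρ (s (κ j) j) ∉ C := by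
      refine hCfreq.mono fun j hj => ?_
      simp only [hκdef, dif_pos hj]
      exact (hκex j hj).choose_spec.2
    exact (hfr.and_eventually hev).exists.elim fun j hj => hj.1 hj.2
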